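/- Let T = 2^n with n ≥ 2. In a perfect skip graph, the maximum position reachable by any SPRAY(log T − 1, log T, 1)_j operation, over all lists j in the maximum level, is T/2 + log T · (T − 1) − 1. -/

import Mathlib

open Finset

lemma sum_pow_two (n : ℕ) : ∑ i : Fin n, 2 ^ (i : ℕ) = 2 ^ n - 1 := by
  induction n with
  | zero => simp
  | succ k ih =>
    rw [Fin.sum_univ_castSucc]
    simp only [Fin.coe_castSucc, Fin.val_last, ih, pow_succ]
    have : 1 ≤ 2 ^ k := Nat.one_le_two_pow
    omega

/-- Let `T = 2^n` with `n ≥ 2`. In a perfect skip graph, a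
`SPRAY(log T − 1, log T, 1)_j` operation starts at the head of list `j` of the maximum
level (these heads occupy positions `0, …, 2^(n-1) − 1`) and moves forward `a i ∈ [0, n]`
nodes at each level `i`, each forward step at level `i` advancing the position by `2^i`.
The maximum position reachable over all lists `j` and all such walks is
`T/2 + log T · (T − 1) − 1 = 2^(n-1) + n·(2^n − 1) − 1`. -/
theorem spray_sg_max_reach (n : ℕ) (hn : 2 ≤ n) :
    (∀ p < 2 ^ (n - 1), ∀ a : Fin n → ℕ, (∀ i, a i ≤ n) →
        p + ∑ i : Fin n, a i * 2 ^ (i : ℕ) ≤ 2 ^ (n - 1) + n * (2 ^ n - 1) - 1) ∧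
    (∃ p < 2 ^ (n - 1), ∃ a : Fin n → ℕ, (∀ i, a i ≤ n) ∧
        p + ∑ i : Fin n, a i * 2 ^ (i : ℕ) = 2 ^ (n - 1) + n * (2 ^ n - 1) - 1) := by
  have hsum : ∑ i : Fin n, n * 2 ^ (i : ℕ) = n * (2 ^ n - 1) := by
    rw [← Finset.mul_sum, sum_pow_two]
  constructor
  · intro p hp a ha
    have h1 : ∑ i : Fin n, a i * 2 ^ (i : ℕ) ≤ n * (2 ^ n - 1) := by
      rw [← hsum]
      exact Finset.sum_le_sum fun i _ => Nat.mul_le_mul_right _ (ha i)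
    omega
  · refine ⟨2 ^ (n - 1) - 1, Nat.sub_lt (Nat.pow_pos two_pos) one_pos, fun _ => n, fun _ => le_refl n, ?_⟩
    rw [hsum]
    have : 1 ≤ 2 ^ (n - 1) := Nat.one_le_two_pow
    omega
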